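/- If κ is a regular uncountable cardinal that is 2-stationary, then κ is a weakly Mahlo cardinal. -/

import Mathlib

open Cardinal

/-- `C` is club in `𝒫_ν(W)` (the subsets of `W` of cardinality `<ν`): `C` consists of
such sets, is cofinal in `(𝒫_ν(W), ⊆)` and is closed under unions of `⊆`-chains of
length `<ν`. -/
def PklClub {α : Type} (W : Set α) (ν : Cardinal.{0}) (C : Set (Set α)) : Prop :=
  (∀ c ∈ C, c ⊆ W ∧ Cardinal.mk ↥c < ν) ∧
  (∀ x : Set α, x ⊆ W → Cardinal.mk ↥x < ν → ∃ c ∈ C, x ⊆ c) ∧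
  (∀ D : Set (Set α), D ⊆ C → D.Nonempty → IsChain (· ⊆ ·) D →
    Cardinal.mk ↥D < ν → ⋃₀ D ∈ C)

/-- `S` is stationary in `𝒫_ν(W)`: it meets every club subset of `𝒫_ν(W)`. -/
def PklStat {α : Type} (W : Set α) (ν : Cardinal.{0}) (S : Set (Set α)) : Prop :=
  ∀ C : Set (Set α), PklClub W ν C → (S ∩ C).Nonempty

/-- `C` is a closed unbounded subset of the ordinal `o`. -/
def OrdClub (o : Ordinal.{0}) (C : Set Ordinal.{0}) : Prop :=
  C ⊆ Set.Iio o ∧ (∀ α < o, ∃ β ∈ C, α ≤ β) ∧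
  (∀ s : Set Ordinal.{0}, s ⊆ C → s.Nonempty → sSup s < o → sSup s ∈ C)

/-- `κ` is weakly Mahlo: `κ` is regular uncountable and the set of regular cardinals
below `κ` is stationary in `κ`. -/
def IsWeaklyMahlo (κ : Cardinal.{0}) : Prop :=
  κ.IsRegular ∧ Cardinal.aleph0 < κ ∧
  ∀ C : Set Ordinal.{0}, OrdClub κ.ord C →
    ∃ α ∈ C, α.card.ord = α ∧ α.card.IsRegular

/-- For `a ⊆ λ` (with `λ` represented by its canonical well-ordered set
`λ.ord.ToType`), the intersection `κ ∩ a`: the set of elements of `a` whose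
position in the well-order is an ordinal `< κ`. -/
def kapInt (lam κ : Cardinal.{0}) (a : Set lam.ord.ToType) : Set lam.ord.ToType :=
  {x ∈ a | ((Ordinal.ToType.mk (o := lam.ord)).symm x).1 < κ.ord}

/-- The regular cardinal `κ` has the 2-stationarity property: for every `λ ≥ κ`,
`𝒫_κ(λ)` is 2-stationary as a subset of itself, i.e. for every stationary
`𝒯 ⊆ 𝒫_κ(λ)` there is `a ∈ 𝒫_κ(λ)` such that `|κ ∩ a|` is regular uncountable
and `𝒯 ∩ 𝒫_{κ∩a}(a)` is stationary in `𝒫_{κ∩a}(a)`. -/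
def TwoStationary (κ : Cardinal.{0}) : Prop :=
  ∀ lam : Cardinal.{0}, κ ≤ lam →
    ∀ T : Set (Set lam.ord.ToType), (∀ x ∈ T, Cardinal.mk ↥x < κ) →
      PklStat Set.univ κ T →
      ∃ a : Set lam.ord.ToType, Cardinal.mk ↥a < κ ∧
        (Cardinal.mk ↥(kapInt lam κ a)).IsRegular ∧
        Cardinal.aleph0 < Cardinal.mk ↥(kapInt lam κ a) ∧
        PklStat a (Cardinal.mk ↥(kapInt lam κ a))
          {x ∈ T | x ⊆ a ∧ Cardinal.mk ↥x < Cardinal.mk ↥(kapInt lam κ a)}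

/-- The initial segment of `lam.ord.ToType` of order type `α`. -/
def seg (lam : Cardinal.{0}) (α : Ordinal.{0}) : Set lam.ord.ToType :=
  {p | ((Ordinal.ToType.mk (o := lam.ord)).symm p).1 < α}

lemma mem_seg {lam : Cardinal.{0}} {α : Ordinal.{0}} {p : lam.ord.ToType} :
    p ∈ seg lam α ↔ ((Ordinal.ToType.mk (o := lam.ord)).symm p).1 < α := Iff.rfl

lemma mk_seg (lam : Cardinal.{0}) {α : Ordinal.{0}} (hα : α ≤ lam.ord) :
    Cardinal.mk ↥(seg lam α) = α.card := by
  have e1 : ↥(seg lam α) ≃ {b : Set.Iio lam.ord // b.1 < α} :=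
    Equiv.subtypeEquiv (Ordinal.ToType.mk (o := lam.ord)).symm.toEquiv (fun p => Iff.rfl)
  have e2 : {b : Set.Iio lam.ord // b.1 < α} ≃ ↥(Set.Iio α) :=
    { toFun := fun b => ⟨b.1.1, b.2⟩
      invFun := fun o => ⟨⟨o.1, lt_of_lt_of_le o.2 hα⟩, o.2⟩
      left_inv := fun b => rfl
      right_inv := fun o => rfl }
  rw [Cardinal.mk_congr ((e1.trans e2).trans (Ordinal.ToType.mk (o := α)).toEquiv),
    Cardinal.mk_toType]

lemma kapInt_self (lam : Cardinal.{0}) (a : Set lam.ord.ToType) : kapInt lam lam a = a := by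
  ext p
  simp only [kapInt, Set.mem_setOf_eq]
  exact and_iff_left (((Ordinal.ToType.mk (o := lam.ord)).symm p).2)

/-- A regular uncountable 2-stationary cardinal is weakly Mahlo. -/
theorem twoStationary_isWeaklyMahlo (κ : Cardinal.{0}) (hreg : κ.IsRegular)
    (hunc : Cardinal.aleph0 < κ) (h : TwoStationary κ) : IsWeaklyMahlo κ := by
  refine ⟨hreg, hunc, ?_⟩
  intro C hC
  obtain ⟨hC1, hC2, hC3⟩ := hC
  have hCκ : ∀ {α}, α ∈ C → α < κ.ord := fun hα => hC1 hα
  have hTsmall : ∀ x ∈ {x | ∃ α ∈ C, x = seg κ α}, Cardinal.mk ↥x < κ := by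
    rintro x ⟨α, hα, rfl⟩
    rw [mk_seg κ (hCκ hα).le]
    exact Cardinal.lt_ord.mp (hCκ hα)
  have hTstat : PklStat Set.univ κ {x | ∃ α ∈ C, x = seg κ α} := by
    rintro 𝒞 ⟨g1, g2, g3⟩
    have hbound : ∀ x ∈ 𝒞, ∃ α ∈ C,
        ∀ p ∈ x, ((Ordinal.ToType.mk (o := κ.ord)).symm p).1 < α := by
      intro x hx
      have hblt : (⨆ p : x, ((Ordinal.ToType.mk (o := κ.ord)).symm p.1).1) < κ.ord := by
        apply Cardinal.iSup_lt_ord_of_isRegular hreg (g1 x hx).2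
        intro p; exact ((Ordinal.ToType.mk (o := κ.ord)).symm p.1).2
      have hb1 : (⨆ p : x, ((Ordinal.ToType.mk (o := κ.ord)).symm p.1).1) + 1 < κ.ord :=
        (by rw [Ordinal.add_one_eq_succ]; exact (Cardinal.isSuccLimit_ord hreg.aleph0_le).succ_lt hblt)
      obtain ⟨α, hα, hle⟩ := hC2 _ hb1
      refine ⟨α, hα, fun p hp => ?_⟩
      have h1 : ((Ordinal.ToType.mk (o := κ.ord)).symm p).1
          ≤ ⨆ p : x, ((Ordinal.ToType.mk (o := κ.ord)).symm p.1).1 :=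
        le_ciSup (Ordinal.bddAbove_range _) (⟨p, hp⟩ : x)
      have h2 : (⨆ p : x, ((Ordinal.ToType.mk (o := κ.ord)).symm p.1).1)
          < (⨆ p : x, ((Ordinal.ToType.mk (o := κ.ord)).symm p.1).1) + 1 := by
        rw [Ordinal.add_one_eq_succ]; exact Order.lt_succ _
      exact lt_of_le_of_lt h1 (lt_of_lt_of_le h2 hle)
    have hnext : ∀ x ∈ 𝒞, ∀ α ∈ C, ∃ y ∈ 𝒞, x ∪ seg κ α ⊆ y := by
      intro x hx α hα
      apply g2 _ (Set.subset_univ _)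
      apply lt_of_le_of_lt (Cardinal.mk_union_le _ _)
      exact Cardinal.add_lt_of_lt hreg.aleph0_le (g1 x hx).2 (hTsmall _ ⟨α, hα, rfl⟩)
    choose A hA₁ hA₂ using hbound
    choose N hN₁ hN₂ using hnext
    obtain ⟨x0, hx0, -⟩ := g2 ∅ (Set.empty_subset _)
      (by rw [Cardinal.mk_emptyCollection]; exact Cardinal.aleph0_pos.trans hunc)
    let X : ℕ → {x : Set κ.ord.ToType // x ∈ 𝒞} := fun n =>
      Nat.rec ⟨x0, hx0⟩
        (fun _ p => ⟨N p.1 p.2 (A p.1 p.2) (hA₁ p.1 p.2),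
          hN₁ p.1 p.2 (A p.1 p.2) (hA₁ p.1 p.2)⟩) n
    have hXs : ∀ n, (X (n + 1)).1
        = N (X n).1 (X n).2 (A (X n).1 (X n).2) (hA₁ (X n).1 (X n).2) := fun n => rfl
    have hmono1 : ∀ n, (X n).1 ⊆ (X (n + 1)).1 := by
      intro n
      rw [hXs n]
      exact Set.Subset.trans Set.subset_union_left (hN₂ (X n).1 (X n).2 _ (hA₁ _ _))
    have hsegsub : ∀ n, seg κ (A (X n).1 (X n).2) ⊆ (X (n + 1)).1 := by
      intro n
      rw [hXs n]
      exact Set.Subset.trans Set.subset_union_right (hN₂ (X n).1 (X n).2 _ (hA₁ _ _))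
    have hmono : ∀ m n, m ≤ n → (X m).1 ⊆ (X n).1 := by
      intro m n hmn
      induction hmn with
      | refl => exact subset_rfl
      | step _ ih => exact Set.Subset.trans ih (hmono1 _)
    have hposlt : ∀ n, ∀ p ∈ (X n).1,
        ((Ordinal.ToType.mk (o := κ.ord)).symm p).1 < A (X n).1 (X n).2 :=
      fun n => hA₂ (X n).1 (X n).2
    -- the limit ordinal
    set aseq : ℕ → Ordinal.{0} := fun n => A (X n).1 (X n).2 with haseq
    have haC : ∀ n, aseq n ∈ C := fun n => hA₁ _ _
    have hδκ : sSup (Set.range aseq) < κ.ord := by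
      refine Cardinal.iSup_lt_ord_of_isRegular hreg ?_ fun n => hCκ (haC n)
      rw [Cardinal.mk_nat]; exact hunc
    have hδC : sSup (Set.range aseq) ∈ C :=
      hC3 _ (by rintro _ ⟨n, rfl⟩; exact haC n) ⟨aseq 0, ⟨0, rfl⟩⟩ hδκ
    -- the union of the chain
    have hDsub : Set.range (fun n => (X n).1) ⊆ 𝒞 := by rintro _ ⟨n, rfl⟩; exact (X n).2
    have hDchain : IsChain (· ⊆ ·) (Set.range (fun n => (X n).1)) := by
      rintro _ ⟨m, rfl⟩ _ ⟨n, rfl⟩ _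
      rcases le_total m n with hmn | hnm
      · exact Or.inl (hmono m n hmn)
      · exact Or.inr (hmono n m hnm)
    have hUD : ⋃₀ Set.range (fun n => (X n).1) ∈ 𝒞 := by
      refine g3 _ hDsub ⟨(X 0).1, ⟨0, rfl⟩⟩ hDchain ?_
      refine lt_of_le_of_lt Cardinal.mk_range_le ?_
      rw [Cardinal.mk_nat]; exact hunc
    have heq : ⋃₀ Set.range (fun n => (X n).1) = seg κ (sSup (Set.range aseq)) := by
      ext p
      simp only [Set.mem_sUnion, Set.mem_range, exists_exists_eq_and, mem_seg]
      constructor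
      · rintro ⟨n, hp⟩
        exact lt_of_lt_of_le (hposlt n p hp) (le_csSup (Ordinal.bddAbove_range _) ⟨n, rfl⟩)
      · intro hp
        obtain ⟨_, ⟨n, rfl⟩, hlt⟩ :=
          (lt_csSup_iff (Ordinal.bddAbove_range _) ⟨aseq 0, ⟨0, rfl⟩⟩).mp hp
        exact ⟨n + 1, hsegsub n hlt⟩
    exact ⟨seg κ (sSup (Set.range aseq)), ⟨sSup (Set.range aseq), hδC, rfl⟩, heq ▸ hUD⟩
  obtain ⟨a, ha, hμreg, hμunc, hμstat⟩ := h κ le_rfl _ hTsmall hTstat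
  rw [kapInt_self] at hμreg hμunc hμstat
  set μ := Cardinal.mk ↥a with hμ
  have hμκ : μ < κ := ha
  have hμord : μ.ord < κ.ord := Cardinal.ord_lt_ord.mpr hμκ
  have hμlim : Order.IsSuccLimit μ.ord := Cardinal.isSuccLimit_ord hμunc.le
  have key : ∀ γ < μ.ord, ∃ α, (α ∈ C ∧ α < μ.ord) ∧ γ < α := by
    intro γ hγ
    have hγ1 : γ + 1 < μ.ord := by rw [Ordinal.add_one_eq_succ]; exact hμlim.succ_lt hγ
    have hns : ¬a ⊆ seg κ (γ + 1) := by
      intro hsub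
      have h1 : μ ≤ (γ + 1).card := by
        rw [← mk_seg κ (hγ1.trans hμord).le]
        exact Cardinal.mk_le_mk_of_subset hsub
      exact absurd h1 (not_le.mpr (Cardinal.lt_ord.mp hγ1))
    obtain ⟨p, hpa, hpns⟩ := Set.not_subset.mp hns
    have hpγ : γ < ((Ordinal.ToType.mk (o := κ.ord)).symm p).1 := by
      have h2 : γ + 1 ≤ ((Ordinal.ToType.mk (o := κ.ord)).symm p).1 := not_lt.mp hpns
      have h3 : γ < γ + 1 := by rw [Ordinal.add_one_eq_succ]; exact Order.lt_succ _
      exact lt_of_lt_of_le h3 h2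
    have hclub : PklClub a μ {c | c ⊆ a ∧ Cardinal.mk ↥c < μ ∧ p ∈ c} := by
      refine ⟨fun c hc => ⟨hc.1, hc.2.1⟩, ?_, ?_⟩
      · intro x hx hxμ
        refine ⟨insert p x, ⟨Set.insert_subset hpa hx, ?_, Set.mem_insert _ _⟩,
          Set.subset_insert _ _⟩
        exact lt_of_le_of_lt Cardinal.mk_insert_le
          (Cardinal.add_lt_of_lt hμreg.aleph0_le hxμ
            (lt_trans Cardinal.one_lt_aleph0 hμunc))
      · intro D hD hne hchain hmkD
        refine ⟨Set.sUnion_subset fun c hc => (hD hc).1, ?_, ?_⟩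
        · apply lt_of_le_of_lt (Cardinal.mk_sUnion_le D)
          apply Cardinal.mul_lt_of_lt hμreg.aleph0_le hmkD
          exact Cardinal.iSup_lt_of_isRegular hμreg hmkD fun c => (hD c.2).2.1
        · obtain ⟨c, hc⟩ := hne
          exact ⟨c, hc, (hD hc).2.2⟩
    obtain ⟨x, hxT', hx𝒞⟩ := hμstat _ hclub
    obtain ⟨⟨α, hαC, rfl⟩, hxa, hxμ⟩ := hxT'
    have hακ : α < κ.ord := hCκ hαC
    rw [mk_seg κ hακ.le] at hxμ
    exact ⟨α, ⟨hαC, Cardinal.lt_ord.mpr hxμ⟩, lt_trans hpγ (mem_seg.mp hx𝒞.2.2)⟩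
  obtain ⟨α0, hα0, -⟩ := key 0 hμlim.pos
  have hbdd : BddAbove {α | α ∈ C ∧ α < μ.ord} := ⟨μ.ord, fun α hα => hα.2.le⟩
  have hsup_le : sSup {α | α ∈ C ∧ α < μ.ord} ≤ μ.ord :=
    csSup_le ⟨α0, hα0⟩ fun α hα => hα.2.le
  have hle_sup : μ.ord ≤ sSup {α | α ∈ C ∧ α < μ.ord} := by
    refine le_of_forall_lt fun γ hγ => ?_
    obtain ⟨α, hα, hγα⟩ := key γ hγ
    exact lt_of_lt_of_le hγα (le_csSup hbdd hα)
  have hsup : sSup {α | α ∈ C ∧ α < μ.ord} = μ.ord := le_antisymm hsup_le hle_sup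
  have hmem : sSup {α | α ∈ C ∧ α < μ.ord} ∈ C :=
    hC3 _ (fun α hα => hα.1) ⟨α0, hα0⟩ (by rw [hsup]; exact hμord)
  rw [hsup] at hmem
  refine ⟨μ.ord, hmem, ?_, ?_⟩
  · rw [Cardinal.card_ord]
  · rw [Cardinal.card_ord]; exact hμreg
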